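/- Let G = (V, E) be a finite simple undirected graph, r ≥ 1 an integer, and x ∈ V, and let G_x be the graph built from G, r and x as in the context. Then: (a) two distinct vertices u, v ∈ V₁ have a common neighbor in G_x (equivalently, are at distance exactly 2 in G_x) if and only if {x} ∪ u ∪ v is not a dominating set of G. Consequently, if |V| ≥ 2r + 1, then: (b) if G has a dominating set of size 2r + 1 containing x, then some pair of distinct vertices of V₁ is at distance greater than 2 in G_x, whereas if G has no dominating set of size 2r + 1 containing x, then every pair of distinct vertices of V₁ is at distance exactly 2 in G_x. -/

import Mathlib

namespace Stmt12

/-- `S` dominates `x`: `x ∈ S` or some vertex of `S` is adjacent to `x`. -/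
def Dominates {V : Type*} (G : SimpleGraph V) (S : Finset V) (x : V) : Prop :=
  x ∈ S ∨ ∃ v ∈ S, G.Adj v x

/-- `S` is a dominating set of `G`. -/
def IsDomSet {V : Type*} (G : SimpleGraph V) (S : Finset V) : Prop :=
  ∀ x, Dominates G S x

/-- The graph `G_x` built from `G`, `r` and `x`: its vertices are `V₁ ⊕ V₂` where `V₁` is
the set of `r`-element subsets of `V` and `V₂ = V ∖ N[x]` (the vertices outside the closed
neighborhood of `x`); `u ∈ V₁` is adjacent to `w ∈ V₂` iff the set `u` does not dominate
`w`; `V₂` induces a clique; there are no edges inside `V₁`. -/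
def Gx {V : Type*} [DecidableEq V] (G : SimpleGraph V) (r : ℕ) (x : V) :
    SimpleGraph ({s : Finset V // s.card = r} ⊕ {y : V // ¬ (y = x ∨ G.Adj x y)}) where
  Adj a b := match a, b with
    | Sum.inl _, Sum.inl _ => False
    | Sum.inl u, Sum.inr y => ¬ Dominates G u.1 y.1
    | Sum.inr y, Sum.inl u => ¬ Dominates G u.1 y.1
    | Sum.inr y, Sum.inr y' => y ≠ y'
  symm := by
    constructor
    rintro (u | u) (v | v) h
    · exact h.elim
    · exact h
    · exact h
    · exact h.symm
  loopless := by
    constructor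
    rintro (u | u) h
    · exact h
    · exact h rfl

lemma dom_insert {V : Type*} [DecidableEq V] {G : SimpleGraph V} {a : V} {S : Finset V}
    {y : V} : Dominates G (insert a S) y ↔ (y = a ∨ G.Adj a y) ∨ Dominates G S y := by
  simp only [Dominates, Finset.mem_insert]
  constructor
  · rintro (h | ⟨w, (rfl | hw), hadj⟩)
    · rcases h with rfl | h
      · exact Or.inl (Or.inl rfl)
      · exact Or.inr (Or.inl h)
    · exact Or.inl (Or.inr hadj)
    · exact Or.inr (Or.inr ⟨w, hw, hadj⟩)
  · rintro ((rfl | h) | (h | ⟨w, hw, hadj⟩))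
    · exact Or.inl (Or.inl rfl)
    · exact Or.inr ⟨a, Or.inl rfl, h⟩
    · exact Or.inl (Or.inr h)
    · exact Or.inr ⟨w, Or.inr hw, hadj⟩

lemma dom_union {V : Type*} [DecidableEq V] {G : SimpleGraph V} {S T : Finset V}
    {y : V} : Dominates G (S ∪ T) y ↔ Dominates G S y ∨ Dominates G T y := by
  simp only [Dominates, Finset.mem_union]
  constructor
  · rintro ((h | h) | ⟨w, (hw | hw), hadj⟩)
    · exact Or.inl (Or.inl h)
    · exact Or.inr (Or.inl h)
    · exact Or.inl (Or.inr ⟨w, hw, hadj⟩)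
    · exact Or.inr (Or.inr ⟨w, hw, hadj⟩)
  · rintro ((h | ⟨w, hw, hadj⟩) | (h | ⟨w, hw, hadj⟩))
    · exact Or.inl (Or.inl h)
    · exact Or.inr ⟨w, Or.inl hw, hadj⟩
    · exact Or.inl (Or.inr h)
    · exact Or.inr ⟨w, Or.inr hw, hadj⟩

lemma dom_mono {V : Type*} {G : SimpleGraph V} {S T : Finset V} (hST : S ⊆ T)
    (h : IsDomSet G S) : IsDomSet G T := by
  intro y
  rcases h y with hy | ⟨w, hw, hadj⟩
  · exact Or.inl (hST hy)
  · exact Or.inr ⟨w, hST hw, hadj⟩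

section main

variable {V : Type*} [DecidableEq V] (G : SimpleGraph V) (r : ℕ) (x : V)

/-- Part (a), common-neighbor characterization. -/
lemma common_iff (u v : {s : Finset V // s.card = r}) :
    (∃ c, (Gx G r x).Adj (Sum.inl u) c ∧ (Gx G r x).Adj c (Sum.inl v)) ↔
      ¬ IsDomSet G (insert x (u.1 ∪ v.1)) := by
  constructor
  · rintro ⟨(w | y), h1, h2⟩
    · exact h1.elim
    · intro hd
      have := hd y.1
      rw [dom_insert, dom_union] at this
      rcases this with h | h | h
      · exact y.2 h
      · exact h1 h
      · exact h2 h
  · intro hd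
    have : ∃ y, ¬ Dominates G (insert x (u.1 ∪ v.1)) y := by
      by_contra h
      push_neg at h
      exact hd h
    obtain ⟨y, hy⟩ := this
    rw [dom_insert, dom_union] at hy
    push_neg at hy
    exact ⟨Sum.inr ⟨y, by push_neg; exact hy.1⟩, hy.2.1, hy.2.2⟩

lemma no_short_walk {u v : {s : Finset V // s.card = r}} (huv : u ≠ v)
    (hnc : ¬ ∃ c, (Gx G r x).Adj (Sum.inl u) c ∧ (Gx G r x).Adj c (Sum.inl v)) :
    ∀ p : (Gx G r x).Walk (Sum.inl u) (Sum.inl v), 2 < p.length := by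
  intro p
  cases p with
  | nil => exact absurd rfl huv
  | cons h q =>
    rename_i c
    cases c with
    | inl w => exact h.elim
    | inr y =>
      cases q with
      | cons h' q' =>
        rename_i d
        simp only [SimpleGraph.Walk.length_cons]
        by_contra hlen
        have hq0 : q'.length = 0 := by omega
        have hd := q'.eq_of_length_eq_zero hq0
        subst hd
        exact hnc ⟨Sum.inr y, h, h'⟩

/-- distance 2 characterization. -/
lemma dist_two_iff {u v : {s : Finset V // s.card = r}} (huv : u ≠ v) :
    (Gx G r x).dist (Sum.inl u) (Sum.inl v) = 2 ↔
      (∃ c, (Gx G r x).Adj (Sum.inl u) c ∧ (Gx G r x).Adj c (Sum.inl v)) := by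
  constructor
  · intro hd
    have hreach : (Gx G r x).Reachable (Sum.inl u) (Sum.inl v) := by
      by_contra h
      rw [SimpleGraph.dist_eq_zero_of_not_reachable h] at hd
      exact absurd hd (by norm_num)
    obtain ⟨p, hp⟩ := hreach.exists_walk_length_eq_dist
    rw [hd] at hp
    cases p with
    | nil => simp at hp
    | cons h q =>
      rename_i c
      cases q with
      | nil => simp at hp
      | cons h' q' =>
        rename_i d
        simp only [SimpleGraph.Walk.length_cons] at hp
        have hq0 : q'.length = 0 := by omega
        have hdv := q'.eq_of_length_eq_zero hq0
        subst hdv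
        exact ⟨c, h, h'⟩
  · rintro ⟨c, h1, h2⟩
    have hle : (Gx G r x).dist (Sum.inl u) (Sum.inl v) ≤ 2 := by
      have := SimpleGraph.dist_le (SimpleGraph.Walk.cons h1 (SimpleGraph.Walk.cons h2 SimpleGraph.Walk.nil))
      simpa using this
    have h0 : (Gx G r x).dist (Sum.inl u) (Sum.inl v) ≠ 0 := by
      intro h
      rw [SimpleGraph.dist_eq_zero_iff_eq_or_not_reachable] at h
      rcases h with h | h
      · exact huv (by simpa using h)
      · exact h ⟨SimpleGraph.Walk.cons h1 (SimpleGraph.Walk.cons h2 SimpleGraph.Walk.nil)⟩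
    have h1' : (Gx G r x).dist (Sum.inl u) (Sum.inl v) ≠ 1 := by
      intro h
      rw [SimpleGraph.dist_eq_one_iff_adj] at h
      exact h.elim
    omega

end main

theorem stmt12 {V : Type*} [Fintype V] [DecidableEq V] (G : SimpleGraph V)
    (r : ℕ) (hr : 1 ≤ r) (x : V) :
    (∀ u v : {s : Finset V // s.card = r}, u ≠ v →
      (((∃ c, (Gx G r x).Adj (Sum.inl u) c ∧ (Gx G r x).Adj c (Sum.inl v)) ↔
          ¬ IsDomSet G (insert x (u.1 ∪ v.1))) ∧
        ((Gx G r x).dist (Sum.inl u) (Sum.inl v) = 2 ↔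
          ¬ IsDomSet G (insert x (u.1 ∪ v.1))))) ∧
    (2 * r + 1 ≤ Fintype.card V →
      ((∃ D : Finset V, D.card = 2 * r + 1 ∧ x ∈ D ∧ IsDomSet G D) →
        ∃ u v : {s : Finset V // s.card = r}, u ≠ v ∧
          ∀ p : (Gx G r x).Walk (Sum.inl u) (Sum.inl v), 2 < p.length) ∧
      (¬ (∃ D : Finset V, D.card = 2 * r + 1 ∧ x ∈ D ∧ IsDomSet G D) →
        ∀ u v : {s : Finset V // s.card = r}, u ≠ v →
          (Gx G r x).dist (Sum.inl u) (Sum.inl v) = 2)) := by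
  refine ⟨fun u v huv => ⟨common_iff G r x u v, (dist_two_iff G r x huv).trans (common_iff G r x u v)⟩, fun hcard => ⟨?_, ?_⟩⟩
  · rintro ⟨D, hDcard, hxD, hDdom⟩
    have herase : (D.erase x).card = 2 * r := by
      rw [Finset.card_erase_of_mem hxD, hDcard]; omega
    obtain ⟨A, hAsub, hAcard⟩ := Finset.exists_subset_card_eq (s := D.erase x) (n := r) (by omega)
    set B := D.erase x \ A with hB
    have hBcard : B.card = r := by
      rw [hB, Finset.card_sdiff_of_subset hAsub, herase, hAcard]; omega
    have hAB : A ∪ B = D.erase x := by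
      rw [hB, Finset.union_sdiff_of_subset hAsub]
    have hABne : A ≠ B := by
      intro h
      have hA0 : A.Nonempty := Finset.card_pos.mp (by omega)
      obtain ⟨a, ha⟩ := hA0
      have : a ∈ B := h ▸ ha
      rw [hB, Finset.mem_sdiff] at this
      exact this.2 ha
    refine ⟨⟨A, hAcard⟩, ⟨B, hBcard⟩, by simpa using hABne, ?_⟩
    apply no_short_walk G r x (by simpa using hABne)
    rw [common_iff]
    push_neg
    simpa [hAB, Finset.insert_erase hxD] using hDdom
  · intro hnoD u v huv
    rw [dist_two_iff G r x huv, common_iff]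
    intro hdom
    have hsub : insert x (u.1 ∪ v.1) ⊆ Finset.univ := Finset.subset_univ _
    have hle : (insert x (u.1 ∪ v.1)).card ≤ 2 * r + 1 := by
      calc (insert x (u.1 ∪ v.1)).card ≤ (u.1 ∪ v.1).card + 1 := Finset.card_insert_le _ _
        _ ≤ u.1.card + v.1.card + 1 := by
            have := Finset.card_union_le u.1 v.1; omega
        _ = 2 * r + 1 := by rw [u.2, v.2]; ring
    obtain ⟨D, hsubD, hDuniv, hDcard⟩ :=
      Finset.exists_subsuperset_card_eq hsub hle (by simpa using hcard)
    exact hnoD ⟨D, hDcard, hsubD (Finset.mem_insert_self _ _), dom_mono hsubD hdom⟩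

end Stmt12
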